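/- Let x be (φ,ε,δ)-feasible, write 𝔠_x := (β(φ,x,ε,δ))^{1/p}, let f_x ∈ E(φ,x,ε,δ), and set S_δ(φ,x,ε) := 𝔠_x · S_δ(φ,1). Then the intersection B̄(x,ε) ∩ S_δ(φ,x,ε) is a singleton {y*}, where y* = x if ε = 0, and y* = (ε·φ(f_x) + δ𝔠_x·x)/(ε + δ𝔠_x) if ε > 0. -/

import Mathlib

open scoped ENNReal RealInnerProductSpace Pointwise
open Metric Set

noncomputable section

variable {H : Type*} [NormedAddCommGroup H] [InnerProductSpace ℝ H]

/-- Feasible pairs `(𝔠, f)` of the linear inverse problem `LIP(φ, x, ε, δ)`: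
`(c f)^(1/p) ≤ 𝔠` and `‖x - φ f‖ ≤ ε + δ 𝔠`. -/
def lipFeas (K : ℕ) (p : ℝ) (c : (Fin K → ℝ) → ℝ)
    (φ : (Fin K → ℝ) →ₗ[ℝ] H) (x : H) (ε δ : ℝ) : Set (ℝ × (Fin K → ℝ)) :=
  {cf | c cf.2 ^ (1 / p) ≤ cf.1 ∧ ‖x - φ cf.2‖ ≤ ε + δ * cf.1}

/-- The optimal value `β(φ,x,ε,δ) ∈ [0,∞]` of `LIP(φ,x,ε,δ)`, i.e. the infimum of `𝔠^p`
over feasible pairs `(𝔠,f)`; it equals `∞` if the problem is infeasible. -/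
def lipVal (K : ℕ) (p : ℝ) (c : (Fin K → ℝ) → ℝ)
    (φ : (Fin K → ℝ) →ₗ[ℝ] H) (x : H) (ε δ : ℝ) : ℝ≥0∞ :=
  sInf ((fun cf : ℝ × (Fin K → ℝ) => ENNReal.ofReal (cf.1 ^ p)) '' lipFeas K p c φ x ε δ)

/-- `E(φ,x,ε,δ)`: the set of `f`-components of optimal solutions of `LIP(φ,x,ε,δ)`. -/
def lipEnc (K : ℕ) (p : ℝ) (c : (Fin K → ℝ) → ℝ)
    (φ : (Fin K → ℝ) →ₗ[ℝ] H) (x : H) (ε δ : ℝ) : Set (Fin K → ℝ) :=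
  {f | ∃ 𝔠 : ℝ, (𝔠, f) ∈ lipFeas K p c φ x ε δ ∧
      ENNReal.ofReal (𝔠 ^ p) = lipVal K p c φ x ε δ}

/-- The set `S_δ(φ,1) = {z : ∃ f, c f ≤ 1 ∧ ‖z - φ f‖ ≤ δ}`. -/
def lipSet (K : ℕ) (c : (Fin K → ℝ) → ℝ)
    (φ : (Fin K → ℝ) →ₗ[ℝ] H) (δ : ℝ) : Set H :=
  {z | ∃ f, c f ≤ 1 ∧ ‖z - φ f‖ ≤ δ}

/-- The dual function `‖λ‖'_φ = sup {⟨λ,z⟩ : z ∈ S_δ(φ,1)}`. -/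
def lipDual (K : ℕ) (c : (Fin K → ℝ) → ℝ)
    (φ : (Fin K → ℝ) →ₗ[ℝ] H) (δ : ℝ) (l : H) : ℝ :=
  sSup ((fun z => ⟪l, z⟫) '' lipSet K c φ δ)

/-- The set `Λ_δ(φ,x,ε)` of optimal dual variables: `λ` with `‖λ‖'_φ = 1` and
`⟨λ,x⟩ - ε‖λ‖ = (β(φ,x,ε,δ))^(1/p)`. -/
def lipLambda (K : ℕ) (p : ℝ) (c : (Fin K → ℝ) → ℝ)
    (φ : (Fin K → ℝ) →ₗ[ℝ] H) (x : H) (ε δ : ℝ) : Set H :=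
  {l | lipDual K c φ δ l = 1 ∧
      ENNReal.ofReal (⟪l, x⟫ - ε * ‖l‖) = lipVal K p c φ x ε δ ^ (1 / p)}

set_option maxHeartbeats 1600000 in
/-- For feasible `x`, with `𝔠ₓ := β^(1/p)` and any `fₓ ∈ E(φ,x,ε,δ)`,
the intersection `B̄(x,ε) ∩ 𝔠ₓ • S_δ(φ,1)` is the singleton `{y*}` described below. -/
theorem intersection_singleton
    [FiniteDimensional ℝ H]
    (K : ℕ) (p : ℝ) (c : (Fin K → ℝ) → ℝ)
    (φ : (Fin K → ℝ) →ₗ[ℝ] H) (x : H) (ε δ : ℝ)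
    (hp : 0 < p) (hc0 : ∀ f, 0 ≤ c f)
    (hhom : ∀ (α : ℝ) (f : Fin K → ℝ), 0 ≤ α → c (α • f) = α ^ p * c f)
    (hconv : Convex ℝ {f | c f ≤ 1}) (hcpt : IsCompact {f | c f ≤ 1})
    (hε : 0 ≤ ε) (hδ : 0 ≤ δ)
    (hfeas : lipVal K p c φ x ε δ ≠ ⊤)
    (cx : ℝ) (hcx : cx = (lipVal K p c φ x ε δ).toReal ^ (1 / p))
    (fx : Fin K → ℝ) (hfx : fx ∈ lipEnc K p c φ x ε δ) :
    (ε = 0 → closedBall x ε ∩ cx • lipSet K c φ δ = {x}) ∧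
    (0 < ε → closedBall x ε ∩ cx • lipSet K c φ δ =
      {(ε + δ * cx)⁻¹ • (ε • (φ fx) + (δ * cx) • x)}) := by
  obtain ⟨𝔠, ⟨hA, hB⟩, hval⟩ := hfx
  have hcfx0 : (0:ℝ) ≤ c fx ^ (1/p) := Real.rpow_nonneg (hc0 fx) _
  have h𝔠0 : (0:ℝ) ≤ 𝔠 := le_trans hcfx0 hA
  have hβt : (lipVal K p c φ x ε δ).toReal = 𝔠 ^ p := by
    rw [← hval, ENNReal.toReal_ofReal (Real.rpow_nonneg h𝔠0 p)]
  have hcx𝔠 : cx = 𝔠 := by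
    rw [hcx, hβt, ← Real.rpow_mul h𝔠0, mul_one_div_cancel hp.ne', Real.rpow_one]
  subst hcx𝔠
  have hcx0 : (0:ℝ) ≤ cx := h𝔠0
  have hβ : ENNReal.ofReal (cx ^ p) = lipVal K p c φ x ε δ := hval
  have hA' : c fx ^ (1/p) ≤ cx := hA
  have hB' : ‖x - φ fx‖ ≤ ε + δ * cx := hB
  have hcfxle : c fx ≤ cx ^ p := by
    have h := Real.rpow_le_rpow hcfx0 hA' hp.le
    rwa [← Real.rpow_mul (hc0 fx), one_div_mul_cancel hp.ne', Real.rpow_one] at h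
  have hub : ∀ (t : ℝ) (f : Fin K → ℝ), 0 ≤ t → c f ≤ 1 → ‖x - φ (t • f)‖ ≤ ε + δ * t →
      lipVal K p c φ x ε δ ≤ ENNReal.ofReal (t ^ p) := by
    intro t f ht hf hnorm
    apply sInf_le
    refine ⟨(t, t • f), ⟨?_, hnorm⟩, rfl⟩
    have h1 : c (t • f) ≤ t ^ p := by
      rw [hhom t f ht]
      calc t ^ p * c f ≤ t ^ p * 1 :=
            mul_le_mul_of_nonneg_left hf (Real.rpow_nonneg ht p)
        _ = t ^ p := mul_one _
    calc c (t • f) ^ (1/p) ≤ (t ^ p) ^ (1/p) :=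
          Real.rpow_le_rpow (hc0 _) h1 (by positivity)
      _ = t := by rw [← Real.rpow_mul ht, mul_one_div_cancel hp.ne', Real.rpow_one]
  have hczero : ∀ f : Fin K → ℝ, c f = 0 → f = 0 := by
    intro f hf
    by_contra hne
    obtain ⟨R, hR⟩ := isBounded_iff_forall_norm_le.mp hcpt.isBounded
    have hfpos : 0 < ‖f‖ := norm_pos_iff.mpr hne
    set α : ℝ := (|R| + 1) / ‖f‖ with hα
    have hα0 : 0 ≤ α := by positivity
    have hmem : α • f ∈ {f | c f ≤ 1} := by
      simp only [mem_setOf_eq, hhom α f hα0, hf, mul_zero]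
      norm_num
    have h2 := hR _ hmem
    rw [norm_smul, Real.norm_of_nonneg hα0, hα, div_mul_cancel₀ _ hfpos.ne'] at h2
    have := le_abs_self R
    linarith
  have hc00 : c 0 = 0 := by
    have h := hhom 0 0 le_rfl
    rwa [zero_smul, Real.zero_rpow hp.ne', zero_mul] at h
  by_cases hcxpos : 0 < cx
  · -- main case: cx > 0
    have key : ∀ y ∈ closedBall x ε ∩ cx • lipSet K c φ δ, ‖y - x‖ = ε := by
      rintro y ⟨hy1, hy2⟩
      rw [mem_closedBall, dist_eq_norm] at hy1
      refine le_antisymm hy1 ?_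
      by_contra hlt
      push_neg at hlt
      obtain ⟨z, ⟨f, hf1, hf2⟩, rfl⟩ := hy2
      set d := ‖cx • z - x‖ with hd
      have hεd : 0 < ε - d := by simpa [hd] using sub_pos.mpr hlt
      set η : ℝ := min cx ((ε - d) / (‖z‖ + 1)) with hη
      have hηpos : 0 < η := lt_min hcxpos (by positivity)
      set t : ℝ := cx - η with ht
      have ht0 : 0 ≤ t := by
        have : η ≤ cx := min_le_left _ _
        simp only [ht]; linarith
      have htlt : t < cx := by simp only [ht]; linarith
      have hzb : η * ‖z‖ ≤ ε - d := by
        calc η * ‖z‖ ≤ (ε - d) / (‖z‖ + 1) * ‖z‖ :=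
              mul_le_mul_of_nonneg_right (min_le_right _ _) (norm_nonneg z)
          _ ≤ ε - d := by
              rw [div_mul_eq_mul_div, div_le_iff₀ (by positivity)]
              nlinarith [norm_nonneg z]
      have hxt : ‖x - t • z‖ ≤ ε := by
        have h1 : x - t • z = (x - cx • z) + η • z := by
          simp only [ht]; module
        calc ‖x - t • z‖ = ‖(x - cx • z) + η • z‖ := by rw [h1]
          _ ≤ ‖x - cx • z‖ + ‖η • z‖ := norm_add_le _ _
          _ = d + η * ‖z‖ := by
              rw [norm_smul, Real.norm_of_nonneg hηpos.le, hd, norm_sub_rev]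
          _ ≤ ε := by linarith
      have hfeast : ‖x - φ (t • f)‖ ≤ ε + δ * t := by
        calc ‖x - φ (t • f)‖ = ‖(x - t • z) + t • (z - φ f)‖ := by
              rw [map_smul]; congr 1; module
          _ ≤ ‖x - t • z‖ + ‖t • (z - φ f)‖ := norm_add_le _ _
          _ ≤ ε + t * δ := by
              rw [norm_smul, Real.norm_of_nonneg ht0]
              gcongr
          _ = ε + δ * t := by ring
      have hle := hub t f ht0 hf1 hfeast
      rw [← hβ] at hle
      have hlt2 : ENNReal.ofReal (t ^ p) < ENNReal.ofReal (cx ^ p) := by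
        exact (ENNReal.ofReal_lt_ofReal_iff (by positivity)).mpr
          (Real.rpow_lt_rpow ht0 htlt hp)
      exact absurd (lt_of_le_of_lt hle hlt2) (lt_irrefl _)
    have hg1 : c (cx⁻¹ • fx) ≤ 1 := by
      rw [hhom _ _ (by positivity)]
      calc (cx⁻¹) ^ p * c fx ≤ (cx⁻¹) ^ p * cx ^ p :=
            mul_le_mul_of_nonneg_left hcfxle (Real.rpow_nonneg (by positivity) p)
        _ = (cx⁻¹ * cx) ^ p := (Real.mul_rpow (by positivity) hcx0).symm
        _ = 1 := by rw [inv_mul_cancel₀ hcxpos.ne', Real.one_rpow]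
    constructor
    · -- ε = 0
      rintro rfl
      have hxmem : x ∈ cx • lipSet K c φ δ := by
        refine Set.mem_smul_set.mpr ⟨cx⁻¹ • x, ?_, smul_inv_smul₀ hcxpos.ne' x⟩
        refine ⟨cx⁻¹ • fx, hg1, ?_⟩
        rw [map_smul, ← smul_sub, norm_smul, Real.norm_of_nonneg (by positivity)]
        calc cx⁻¹ * ‖x - φ fx‖ ≤ cx⁻¹ * (0 + δ * cx) := by gcongr
          _ = δ := by field_simp; ring
      ext y
      simp only [closedBall_zero, mem_inter_iff, mem_singleton_iff]
      constructor
      · rintro ⟨h1, _⟩; exact h1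
      · rintro rfl; exact ⟨rfl, hxmem⟩
    · -- ε > 0
      intro hεpos
      set s : ℝ := ε + δ * cx with hs
      have hspos : 0 < s := by positivity
      set ystar : H := s⁻¹ • (ε • (φ fx) + (δ * cx) • x) with hystar
      have hsy : s • ystar = ε • (φ fx) + (δ * cx) • x := by
        rw [hystar, smul_inv_smul₀ hspos.ne']
      have hy1 : ystar - x = s⁻¹ • (ε • (φ fx - x)) := by
        apply smul_right_injective H hspos.ne'
        show s • (ystar - x) = s • (s⁻¹ • (ε • (φ fx - x)))
        rw [smul_inv_smul₀ hspos.ne', smul_sub, hsy]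
        simp only [hs]; module
      have hy2 : ystar - φ fx = s⁻¹ • ((δ * cx) • (x - φ fx)) := by
        apply smul_right_injective H hspos.ne'
        show s • (ystar - φ fx) = s • (s⁻¹ • ((δ * cx) • (x - φ fx)))
        rw [smul_inv_smul₀ hspos.ne', smul_sub, hsy]
        simp only [hs]; module
      have hmem1 : ystar ∈ closedBall x ε := by
        rw [mem_closedBall, dist_eq_norm, hy1, norm_smul, norm_smul,
          Real.norm_of_nonneg (by positivity : (0:ℝ) ≤ s⁻¹),
          Real.norm_of_nonneg hε]
        calc s⁻¹ * (ε * ‖φ fx - x‖) ≤ s⁻¹ * (ε * s) := by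
              rw [norm_sub_rev]; gcongr
          _ = ε := by field_simp
      have hmem2 : ystar ∈ cx • lipSet K c φ δ := by
        refine Set.mem_smul_set.mpr ⟨cx⁻¹ • ystar, ?_, smul_inv_smul₀ hcxpos.ne' _⟩
        refine ⟨cx⁻¹ • fx, hg1, ?_⟩
        rw [map_smul, ← smul_sub, norm_smul,
          Real.norm_of_nonneg (by positivity : (0:ℝ) ≤ cx⁻¹),
          hy2, norm_smul, norm_smul, Real.norm_of_nonneg (by positivity : (0:ℝ) ≤ s⁻¹),
          Real.norm_of_nonneg (by positivity : (0:ℝ) ≤ δ * cx)]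
        calc cx⁻¹ * (s⁻¹ * (δ * cx * ‖x - φ fx‖)) ≤ cx⁻¹ * (s⁻¹ * (δ * cx * s)) := by
              gcongr
          _ = δ := by field_simp
      ext y
      simp only [mem_inter_iff, mem_singleton_iff]
      constructor
      · rintro ⟨hyb, hys⟩
        obtain ⟨z1, ⟨f1, hf11, hf12⟩, hz1⟩ := hys
        obtain ⟨z2, ⟨f2, hf21, hf22⟩, hz2⟩ := id hmem2
        set m : H := (2:ℝ)⁻¹ • (y + ystar) with hm
        have hmball : m ∈ closedBall x ε := by
          rw [mem_closedBall, dist_eq_norm]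
          have h1 : m - x = (2:ℝ)⁻¹ • ((y - x) + (ystar - x)) := by
            rw [hm]; module
          rw [h1, norm_smul, Real.norm_of_nonneg (by norm_num : (0:ℝ) ≤ (2:ℝ)⁻¹)]
          have h2 : ‖y - x‖ ≤ ε := by rw [← dist_eq_norm]; exact hyb
          have h3 : ‖ystar - x‖ ≤ ε := by rw [← dist_eq_norm]; exact hmem1
          calc (2:ℝ)⁻¹ * ‖(y - x) + (ystar - x)‖
              ≤ (2:ℝ)⁻¹ * (‖y - x‖ + ‖ystar - x‖) := by gcongr; exact norm_add_le _ _
            _ ≤ ε := by linarith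
        have hmset : m ∈ cx • lipSet K c φ δ := by
          refine Set.mem_smul_set.mpr ⟨(2:ℝ)⁻¹ • (z1 + z2), ?_, ?_⟩
          refine ⟨(2:ℝ)⁻¹ • (f1 + f2), ?_, ?_⟩
          · have h := hconv hf11 hf21 (by norm_num : (0:ℝ) ≤ 1/2) (by norm_num : (0:ℝ) ≤ 1/2)
              (by norm_num : (1:ℝ)/2 + 1/2 = 1)
            have he : (1/2 : ℝ) • f1 + (1/2 : ℝ) • f2 = (2:ℝ)⁻¹ • (f1 + f2) := by module
            rwa [he] at h
          · rw [map_smul, map_add, ← smul_sub, norm_smul,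
              Real.norm_of_nonneg (by norm_num : (0:ℝ) ≤ (2:ℝ)⁻¹)]
            have h4 : z1 + z2 - (φ f1 + φ f2) = (z1 - φ f1) + (z2 - φ f2) := by module
            rw [h4]
            calc (2:ℝ)⁻¹ * ‖(z1 - φ f1) + (z2 - φ f2)‖
                ≤ (2:ℝ)⁻¹ * (‖z1 - φ f1‖ + ‖z2 - φ f2‖) := by gcongr; exact norm_add_le _ _
              _ ≤ δ := by linarith
          · rw [hm, ← hz1, ← hz2]; module
        have hym : ‖y - x‖ = ε := key y ⟨hyb, ⟨z1, ⟨f1, hf11, hf12⟩, hz1⟩⟩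
        have hysm : ‖ystar - x‖ = ε := key ystar ⟨hmem1, hmem2⟩
        have hmm : ‖m - x‖ = ε := key m ⟨hmball, hmset⟩
        have hpar := parallelogram_law_with_norm ℝ (y - x) (ystar - x)
        have hsum : (y - x) + (ystar - x) = (2:ℝ) • (m - x) := by rw [hm]; module
        have hns : ‖(y - x) + (ystar - x)‖ = 2 * ε := by
          rw [hsum, norm_smul, Real.norm_of_nonneg (by norm_num : (0:ℝ) ≤ 2), hmm]
        have hdiff : ‖(y - x) - (ystar - x)‖ = 0 := by
          nlinarith [hpar, hns, hym, hysm, norm_nonneg ((y - x) - (ystar - x))]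
        have h5 : (y - x) - (ystar - x) = 0 := norm_eq_zero.mp hdiff
        have h6 : y - ystar = 0 := by rw [← h5]; module
        exact sub_eq_zero.mp h6
      · rintro rfl
        exact ⟨hmem1, hmem2⟩
  · -- cx = 0
    have hcx00 : cx = 0 := le_antisymm (not_lt.mp hcxpos) hcx0
    have hcfx : c fx = 0 := by
      by_contra hne
      have hpos : 0 < c fx := lt_of_le_of_ne (hc0 fx) (Ne.symm hne)
      have h := Real.rpow_pos_of_pos hpos (1/p)
      have h2 : c fx ^ (1/p) ≤ 0 := hcx00 ▸ hA'
      linarith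
    have hfx0 : fx = 0 := hczero fx hcfx
    have hxnorm : ‖x‖ ≤ ε := by
      have h := hB'
      rw [hfx0, map_zero, sub_zero, hcx00, mul_zero, add_zero] at h
      exact h
    have hSne : (lipSet K c φ δ).Nonempty := by
      refine ⟨0, 0, by rw [hc00]; norm_num, ?_⟩
      rw [map_zero, sub_zero, norm_zero]; exact hδ
    have hS0 : cx • lipSet K c φ δ = {0} := by
      rw [hcx00, zero_smul_set hSne]; rfl
    have h0ball : (0:H) ∈ closedBall x ε := by
      rw [mem_closedBall, dist_eq_norm, zero_sub, norm_neg]; exact hxnorm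
    constructor
    · rintro rfl
      have hx0 : x = 0 := by
        have h : ‖x‖ ≤ 0 := hxnorm
        exact norm_le_zero_iff.mp h
      ext y
      simp only [closedBall_zero, hS0, mem_inter_iff, mem_singleton_iff, hx0]
      tauto
    · intro hεpos
      have hy0 : (ε + δ * cx)⁻¹ • (ε • (φ fx) + (δ * cx) • x) = (0:H) := by
        simp [hfx0, hcx00]
      rw [hS0, hy0]
      ext y
      simp only [mem_inter_iff, mem_singleton_iff]
      constructor
      · rintro ⟨_, h⟩; exact h
      · rintro rfl; exact ⟨h0ball, rfl⟩
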